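/- Fix integers k ≥ 3. For each g ≥ 2 let λ_g be the largest real root of q_{g,k}(x) = x^{2g+1} - (k-1)x^{2g} + (k-1)x - 1. Then λ_g → k - 1 as g → ∞. -/
import Mathlib


theorem largest_root_tendsto (k : ℕ) (hk : 3 ≤ k) (lam : ℕ → ℝ)
    (h : ∀ g : ℕ, 2 ≤ g →
      IsGreatest {x : ℝ | x ^ (2 * g + 1) - ((k : ℝ) - 1) * x ^ (2 * g) + ((k : ℝ) - 1) * x - 1 = 0}
        (lam g)) :
    Filter.Tendsto lam Filter.atTop (nhds ((k : ℝ) - 1)) := by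
  have hk3 : (3 : ℝ) ≤ (k : ℝ) := by exact_mod_cast hk
  set c : ℝ := (k : ℝ) - 1 with hc
  have hc2 : (2 : ℝ) ≤ c := by simp [hc]; linarith
  rw [Metric.tendsto_atTop]
  intro ε hε
  set δ : ℝ := min (ε / 2) (1 / 2) with hδdef
  have hδ0 : 0 < δ := lt_min (by linarith) (by norm_num)
  have hδ1 : δ < 1 := lt_of_le_of_lt (min_le_right _ _) (by norm_num)
  have hδε : δ < ε := lt_of_le_of_lt (min_le_left _ _) (by linarith)
  set a : ℝ := c - δ with ha
  have ha1 : 1 < a := by simp [ha]; linarith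
  have ha2 : 1 < a ^ 2 := one_lt_pow₀ ha1 (by norm_num)
  have hpow : Filter.Tendsto (fun g : ℕ => (a ^ 2) ^ g) Filter.atTop Filter.atTop :=
    tendsto_pow_atTop_atTop_of_one_lt ha2
  obtain ⟨N, hN⟩ := Filter.eventually_atTop.1 (hpow.eventually_ge_atTop (c * a / δ + 1))
  refine ⟨max N 2, fun g hg => ?_⟩
  have hg2 : 2 ≤ g := le_trans (le_max_right _ _) hg
  have hgN : N ≤ g := le_trans (le_max_left _ _) hg
  obtain ⟨hmem, hub⟩ := h g hg2
  have hroot : (lam g) ^ (2 * g + 1) - c * (lam g) ^ (2 * g) + c * (lam g) - 1 = 0 := hmem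
  -- upper bound: lam g ≤ c
  have hup : lam g ≤ c := by
    by_contra hlt
    push_neg at hlt
    have hL0 : 0 < lam g := by linarith
    have hp : 0 < (lam g) ^ (2 * g) := pow_pos hL0 _
    have hsucc : (lam g) ^ (2 * g + 1) = (lam g) ^ (2 * g) * lam g := pow_succ _ _
    nlinarith [mul_pos hp (sub_pos.2 hlt)]
  -- lower bound via IVT
  have hac : a ≤ c := by simp [ha]; linarith
  have hcont : Continuous fun x : ℝ => x ^ (2 * g + 1) - c * x ^ (2 * g) + c * x - 1 :=
    (((continuous_pow _).sub ((continuous_const.mul (continuous_pow _)))).add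
      (continuous_const.mul continuous_id)).sub continuous_const
  have hag : c * a / δ + 1 ≤ (a ^ 2) ^ g := hN g hgN
  have hapow : a ^ (2 * g) = (a ^ 2) ^ g := by rw [← pow_mul]
  have hqa : a ^ (2 * g + 1) - c * a ^ (2 * g) + c * a - 1 ≤ 0 := by
    have hsucc : a ^ (2 * g + 1) = a ^ (2 * g) * a := pow_succ _ _
    have h1 : c * a / δ + 1 ≤ a ^ (2 * g) := by rw [hapow]; exact hag
    have h2 : δ * (a ^ (2 * g)) ≥ δ * (c * a / δ + 1) := by
      exact mul_le_mul_of_nonneg_left h1 hδ0.le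
    have h3 : δ * (c * a / δ + 1) = c * a + δ := by field_simp
    have hamc : a - c = -δ := by simp [ha]
    calc a ^ (2 * g + 1) - c * a ^ (2 * g) + c * a - 1
        = a ^ (2 * g) * (a - c) + c * a - 1 := by rw [hsucc]; ring
      _ = -(δ * a ^ (2 * g)) + c * a - 1 := by rw [hamc]; ring
      _ ≤ -(c * a + δ) + c * a - 1 := by
          have := h3 ▸ h2; linarith
      _ ≤ 0 := by linarith
  have hqc : (0 : ℝ) ≤ c ^ (2 * g + 1) - c * c ^ (2 * g) + c * c - 1 := by
    have hsucc : c ^ (2 * g + 1) = c ^ (2 * g) * c := pow_succ _ _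
    rw [hsucc]; nlinarith
  have hivt := intermediate_value_Icc hac (hcont.continuousOn)
  have h0mem : (0 : ℝ) ∈ Set.Icc (a ^ (2 * g + 1) - c * a ^ (2 * g) + c * a - 1)
      (c ^ (2 * g + 1) - c * c ^ (2 * g) + c * c - 1) := ⟨hqa, hqc⟩
  obtain ⟨x, hxIcc, hxq⟩ := hivt h0mem
  have hxroot : x ∈ {x : ℝ | x ^ (2 * g + 1) - c * x ^ (2 * g) + c * x - 1 = 0} := hxq
  have hlow : a ≤ lam g := le_trans hxIcc.1 (hub hxroot)
  rw [Real.dist_eq, abs_lt]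
  constructor <;> [skip; linarith]
  have : c - δ ≤ lam g := hlow
  linarith
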